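/- Let R be a finite commutative ring with unity equipped with the discrete topology, Γ a set with at least two elements, φ: Γ → Γ a map, and w ∈ R^Γ a weight vector. Then the weighted generalized shift σ_{φ,w}: R^Γ → R^Γ is surjective if and only if the set Per(σ_{φ,w}) of periodic points of σ_{φ,w} is dense in R^Γ (with the product topology). -/

import Mathlib

open Function Set

namespace WGShift

variable {Γ R : Type*}

/-- The basic entourage `O_M` determined by a set of coordinates `M ⊆ Γ`. -/
def shiftOM (M : Set Γ) : Set ((Γ → R) × (Γ → R)) :=
  {p | ∀ α ∈ M, p.1 α = p.2 α}

/-- Entourages of the product uniformity on `Γ → R` (with `R` discrete):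
exactly the sets containing some `O_M` with `M` finite. -/
def IsEntourage (O : Set ((Γ → R) × (Γ → R))) : Prop :=
  ∃ M : Set Γ, M.Finite ∧ shiftOM M ⊆ O

/-- The weighted generalized shift `σ_{φ,w}`. -/
def wshift [Mul R] (φ : Γ → Γ) (w : Γ → R) : (Γ → R) → (Γ → R) :=
  fun x α => w α * x (φ α)

/-- `α` is quasi-periodic under `φ` if `φ^i α = φ^j α` for some `i > j ≥ 1`. -/
def IsQuasiPeriodic (φ : Γ → Γ) (α : Γ) : Prop :=
  ∃ i j : ℕ, 1 ≤ j ∧ j < i ∧ φ^[i] α = φ^[j] α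

/-- Sensitivity of `(R^Γ, f)` with respect to the product uniformity. -/
def Sensitive [TopologicalSpace R] (f : (Γ → R) → (Γ → R)) : Prop :=
  ∃ O : Set ((Γ → R) × (Γ → R)), IsEntourage O ∧
    ∀ x : Γ → R, ∀ U : Set (Γ → R), IsOpen U → x ∈ U →
      ∃ y ∈ U, ∃ n : ℕ, (f^[n] x, f^[n] y) ∉ O

/-- Strong sensitivity of `(R^Γ, f)` with respect to the product uniformity. -/
def StronglySensitive [TopologicalSpace R] (f : (Γ → R) → (Γ → R)) : Prop :=
  ∃ O : Set ((Γ → R) × (Γ → R)), IsEntourage O ∧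
    ∀ x : Γ → R, ∀ U : Set (Γ → R), IsOpen U → x ∈ U →
      ∃ y ∈ U, ∃ N : ℕ, ∀ n ≥ N, (f^[n] x, f^[n] y) ∉ O

/-- `x, y` are proximal for `f`. -/
def ProximalPair (f : (Γ → R) → (Γ → R)) (x y : Γ → R) : Prop :=
  ∀ O : Set ((Γ → R) × (Γ → R)), IsEntourage O →
    ∃ n ≥ 1, (f^[n] x, f^[n] y) ∈ O

/-- `x, y` are asymptotic for `f`. -/
def AsymptoticPair (f : (Γ → R) → (Γ → R)) (x y : Γ → R) : Prop :=
  ∀ O : Set ((Γ → R) × (Γ → R)), IsEntourage O →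
    ∃ N ≥ 1, ∀ n ≥ N, (f^[n] x, f^[n] y) ∈ O

/-- A scrambled pair: proximal but not asymptotic. -/
def ScrambledPair (f : (Γ → R) → (Γ → R)) (x y : Γ → R) : Prop :=
  ProximalPair f x y ∧ ¬ AsymptoticPair f x y

/-- Li–Yorke chaos: existence of an uncountable scrambled set. -/
def LiYorkeChaotic (f : (Γ → R) → (Γ → R)) : Prop :=
  ∃ A : Set (Γ → R), ¬ A.Countable ∧
    ∀ x ∈ A, ∀ y ∈ A, x ≠ y → ScrambledPair f x y

/-- Topological transitivity of `(R^Γ, f)`. -/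
def TopTransitive [TopologicalSpace R] (f : (Γ → R) → (Γ → R)) : Prop :=
  ∀ U V : Set (Γ → R), IsOpen U → IsOpen V → U.Nonempty → V.Nonempty →
    ∃ n ≥ 1, (f^[n] '' U ∩ V).Nonempty

/-- The set of periodic points of `f`. -/
def perPoints (f : (Γ → R) → (Γ → R)) : Set (Γ → R) :=
  {x | ∃ n ≥ 1, f^[n] x = x}

/-- Devaney chaos: sensitive, topologically transitive, dense periodic points. -/
def DevaneyChaotic [TopologicalSpace R] (f : (Γ → R) → (Γ → R)) : Prop :=
  Sensitive f ∧ TopTransitive f ∧ Dense (perPoints f)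

open Classical in
/-- The point `x^A ∈ R^Γ` built from `A ⊆ ℕ` along the orbit of `ν`. -/
noncomputable def xA [Zero R] [One R] (φ : Γ → Γ) (ν : Γ) (A : Set ℕ) : Γ → R :=
  fun α => if ∃ p : ℕ, p ∈ A ∧ α = φ^[p * (p + 1) / 2] ν then 1 else 0

end WGShift

open WGShift


section Helpers

variable {Γ R : Type*} [CommRing R] (φ : Γ → Γ) (w : Γ → R)

def Wprod (n : ℕ) (γ : Γ) : R := ∏ k ∈ Finset.range n, w (φ^[k] γ)

lemma Wprod_zero (γ : Γ) : Wprod φ w 0 γ = 1 := Finset.prod_range_zero _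

lemma Wprod_add (a b : ℕ) (γ : Γ) :
    Wprod φ w (a + b) γ = Wprod φ w a γ * Wprod φ w b (φ^[a] γ) := by
  unfold Wprod
  rw [Finset.prod_range_add]
  congr 1
  refine Finset.prod_congr rfl fun k _ => ?_
  rw [add_comm a k, Function.iterate_add_apply]

lemma wshift_iterate (n : ℕ) (x : Γ → R) :
    (wshift φ w)^[n] x = fun γ => Wprod φ w n γ * x (φ^[n] γ) := by
  induction n generalizing x with
  | zero => funext γ; simp [Wprod_zero]
  | succ n ih =>
    rw [Function.iterate_succ_apply, ih]
    funext γ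
    show Wprod φ w n γ * (w (φ^[n] γ) * x (φ (φ^[n] γ))) = _
    rw [← Function.iterate_succ_apply' φ n γ]
    unfold Wprod
    rw [Finset.prod_range_succ, mul_assoc]

lemma perPoints_zero : (0 : Γ → R) ∈ perPoints (wshift φ w) := by
  refine ⟨1, le_refl _, ?_⟩
  funext γ; simp [wshift]

lemma perPoints_add {x y : Γ → R} (hx : x ∈ perPoints (wshift φ w))
    (hy : y ∈ perPoints (wshift φ w)) : x + y ∈ perPoints (wshift φ w) := by
  obtain ⟨n, hn1, hn⟩ := hx
  obtain ⟨m, hm1, hm⟩ := hy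
  refine ⟨n * m, Nat.one_le_iff_ne_zero.2 (by positivity), ?_⟩
  have hiter_add : ∀ k : ℕ,
      (wshift φ w)^[k] (x + y) = (wshift φ w)^[k] x + (wshift φ w)^[k] y := by
    intro k
    funext γ
    simp only [wshift_iterate, Pi.add_apply, mul_add]
  have hxnm : (wshift φ w)^[n * m] x = x := by
    rw [Function.iterate_mul]; exact Function.IsFixedPt.iterate hn m
  have hynm : (wshift φ w)^[n * m] y = y := by
    rw [mul_comm, Function.iterate_mul]; exact Function.IsFixedPt.iterate hm n
  rw [hiter_add, hxnm, hynm]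

variable {φ w}

lemma single_periodic [Fintype R] (hφ : Function.Injective φ) (hw : ∀ α, IsUnit (w α))
    {β : Γ} {p : ℕ} (hp : 1 ≤ p) (hfix : φ^[p] β = β) (c : R) :
    ∃ x ∈ perPoints (wshift φ w), x β = c ∧ ∀ i, i ≠ β → x i = 0 := by
  classical
  have hWu : IsUnit (Wprod φ w p β) := by
    unfold Wprod
    exact Finset.prod_induction _ IsUnit (fun a b => IsUnit.mul) isUnit_one
      (fun k _ => hw _)
  set U : Rˣ := hWu.unit with hU
  have hm1 : 1 ≤ orderOf U := orderOf_pos U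
  have hUm : (Wprod φ w p β) ^ (orderOf U) = 1 := by
    have : (U ^ orderOf U : Rˣ) = 1 := pow_orderOf_eq_one U
    have h2 := congrArg (Units.val) this
    rwa [Units.val_pow_eq_pow_val, hWu.unit_spec] at h2
  set m := orderOf U with hmdef
  have hfixmul : ∀ k : ℕ, φ^[p * k] β = β := by
    intro k
    rw [Function.iterate_mul]
    exact Function.IsFixedPt.iterate hfix k
  have hWpow : ∀ k : ℕ, Wprod φ w (p * k) β = (Wprod φ w p β) ^ k := by
    intro k
    induction k with
    | zero => simp [Wprod_zero]
    | succ k ih =>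
      rw [Nat.mul_succ, Wprod_add, ih, hfixmul k, pow_succ]
  set N := p * m with hNdef
  have hN1 : 1 ≤ N := by
    have : 0 < p * m := Nat.mul_pos hp hm1
    omega
  have hfixN : φ^[N] β = β := hfixmul m
  have hWN : Wprod φ w N β = 1 := by rw [hNdef, hWpow, hUm]
  refine ⟨fun γ => if γ = β then c else 0, ⟨N, hN1, ?_⟩, by simp, fun i hi => by simp [hi]⟩
  rw [wshift_iterate]
  funext γ
  by_cases h : γ = β
  · subst h
    simp only [hfixN, if_pos rfl, hWN, one_mul]
  · have hne : φ^[N] γ ≠ β := fun he => h (hφ.iterate N (he.trans hfixN.symm))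
    simp only [if_neg h, if_neg hne, mul_zero]

lemma single_nonper (hφ : Function.Injective φ) (hw : ∀ α, IsUnit (w α))
    {β : Γ} (hnp : ∀ n, 1 ≤ n → φ^[n] β ≠ β) (c : R) (I : Finset Γ) :
    ∃ x ∈ perPoints (wshift φ w), x β = c ∧ ∀ i ∈ I, i ≠ β → x i = 0 := by
  classical
  -- distinctness of iterates of β
  have kβ : ∀ a b : ℕ, a < b → φ^[a] β = φ^[b] β → False := by
    intro a b hab h
    have h2 : φ^[b] β = φ^[a] (φ^[b - a] β) := by
      rw [← Function.iterate_add_apply, show a + (b - a) = b by omega]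
    have h3 := hφ.iterate a (h.trans h2)
    exact hnp (b - a) (by omega) h3.symm
  have keyβ : ∀ a b : ℕ, φ^[a] β = φ^[b] β → a = b := by
    intro a b h
    rcases Nat.lt_trichotomy a b with h1 | h1 | h1
    · exact absurd h (fun hh => kβ a b h1 hh)
    · exact h1
    · exact absurd h.symm (fun hh => kβ b a h1 hh)
  have k2 : ∀ (i : Γ) (a b : ℕ), a < b → φ^[a] i = β → φ^[b] i = β → False := by
    intro i a b hab ha hb
    have h2 : φ^[b - a + a] i = φ^[b - a] (φ^[a] i) := Function.iterate_add_apply φ (b - a) a i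
    rw [show b - a + a = b by omega, hb, ha] at h2
    exact hnp (b - a) (by omega) h2.symm
  have key2 : ∀ (i : Γ) (a b : ℕ), φ^[a] i = β → φ^[b] i = β → a = b := by
    intro i a b ha hb
    rcases Nat.lt_trichotomy a b with h1 | h1 | h1
    · exact absurd ha (fun _ => k2 i a b h1 ha hb)
    · exact h1
    · exact absurd ha (fun _ => k2 i b a h1 hb ha)
  -- the finite bad set
  set Bad : Set ℕ := {n : ℕ | ∃ i ∈ I, φ^[n] β = i ∨ φ^[n] i = β} with hBaddef
  have hBadFin : Bad.Finite := by
    have hsub : Bad ⊆ ⋃ i ∈ (I : Set Γ), ({n : ℕ | φ^[n] β = i} ∪ {n : ℕ | φ^[n] i = β}) := by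
      rintro n ⟨i, hi, h⟩
      exact Set.mem_biUnion hi (by cases h with
        | inl h => exact Or.inl h
        | inr h => exact Or.inr h)
    refine Set.Finite.subset (Set.Finite.biUnion I.finite_toSet fun i _ => ?_) hsub
    refine Set.Finite.union ?_ ?_
    · exact Set.Subsingleton.finite (fun a ha b hb => keyβ a b (ha.trans hb.symm))
    · exact Set.Subsingleton.finite (fun a ha b hb => key2 i a b ha hb)
  obtain ⟨N0, hN0⟩ := hBadFin.bddAbove
  obtain ⟨N, hN1, hNotBad⟩ : ∃ N : ℕ, 1 ≤ N ∧ ∀ n : ℕ, N ≤ n → n ∉ Bad :=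
    ⟨N0 + 1, by omega, fun n hn hmem => by have := hN0 hmem; omega⟩
  -- right inverses of the weights along the orbit of β
  choose v hv using fun γ => (hw γ).exists_right_inv
  set V : ℕ → R := fun n => ∏ k ∈ Finset.range n, v (φ^[k] β) with hVdef
  have hWV : ∀ n : ℕ, Wprod φ w n β * V n = 1 := by
    intro n
    rw [hVdef]
    unfold Wprod
    rw [← Finset.prod_mul_distrib]
    exact Finset.prod_eq_one fun k _ => hv _
  -- the point x
  obtain ⟨x, hxdef⟩ : ∃ x : Γ → R, x = fun γ =>
      if h : ∃ a : ℕ, φ^[a * N] γ = β then Wprod φ w (Classical.choose h * N) γ * c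
      else if h2 : ∃ b : ℕ, φ^[b * N] β = γ then V (Classical.choose h2 * N) * c
      else 0 := ⟨_, rfl⟩
  have xback : ∀ (γ : Γ) (a : ℕ), φ^[a * N] γ = β → x γ = Wprod φ w (a * N) γ * c := by
    intro γ a ha
    have hex : ∃ a : ℕ, φ^[a * N] γ = β := ⟨a, ha⟩
    have hch := Classical.choose_spec hex
    have : Classical.choose hex = a := by
      have := key2 γ (Classical.choose hex * N) (a * N) hch ha
      exact Nat.eq_of_mul_eq_mul_right (by omega) this
    rw [hxdef]
    simp only [dif_pos hex, this]
  have xfwd : ∀ (γ : Γ) (b : ℕ), (¬ ∃ a : ℕ, φ^[a * N] γ = β) → φ^[b * N] β = γ →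
      x γ = V (b * N) * c := by
    intro γ b h1 hb
    have hex : ∃ b : ℕ, φ^[b * N] β = γ := ⟨b, hb⟩
    have hch := Classical.choose_spec hex
    have : Classical.choose hex = b := by
      have := keyβ (Classical.choose hex * N) (b * N) (hch.trans hb.symm)
      exact Nat.eq_of_mul_eq_mul_right (by omega) this
    rw [hxdef]
    simp only [dif_neg h1, dif_pos hex, this]
  have xnone : ∀ γ : Γ, (¬ ∃ a : ℕ, φ^[a * N] γ = β) → (¬ ∃ b : ℕ, φ^[b * N] β = γ) →
      x γ = 0 := by
    intro γ h1 h2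
    rw [hxdef]
    simp only [dif_neg h1, dif_neg h2]
  have hxβ : x β = c := by
    rw [xback β 0 (by simp), show (0 : ℕ) * N = 0 by omega, Wprod_zero, one_mul]
  refine ⟨x, ⟨N, hN1, ?_⟩, hxβ, ?_⟩
  · -- periodicity
    rw [wshift_iterate]
    funext γ
    show Wprod φ w N γ * x (φ^[N] γ) = x γ
    by_cases h1 : ∃ a : ℕ, φ^[a * N] γ = β
    · obtain ⟨a, ha⟩ := h1
      rw [xback γ a ha]
      cases a with
      | zero =>
        have hγβ : γ = β := by simpa using ha
        rw [hγβ]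
        have hnback : ¬ ∃ a : ℕ, φ^[a * N] (φ^[N] β) = β := by
          rintro ⟨a2, ha2⟩
          have : φ^[a2 * N + N] β = β := by
            rw [Function.iterate_add_apply]; exact ha2
          exact hnp _ (by omega) this
        rw [xfwd (φ^[N] β) 1 hnback (by rw [one_mul])]
        rw [show (0 : ℕ) * N = 0 by omega, Wprod_zero, one_mul, one_mul, ← mul_assoc,
          hWV N, one_mul]
      | succ a' =>
        have hδ : φ^[a' * N] (φ^[N] γ) = β := by
          rw [← Function.iterate_add_apply, show a' * N + N = (a' + 1) * N by ring]
          exact ha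
        rw [xback (φ^[N] γ) a' hδ, ← mul_assoc, ← Wprod_add,
          show N + a' * N = (a' + 1) * N by ring]
    · by_cases h2 : ∃ b : ℕ, φ^[b * N] β = γ
      · obtain ⟨b, hb⟩ := h2
        rw [xfwd γ b h1 hb]
        have hδf : φ^[(b + 1) * N] β = φ^[N] γ := by
          rw [show (b + 1) * N = N + b * N by ring, Function.iterate_add_apply, hb]
        have hδnb : ¬ ∃ a : ℕ, φ^[a * N] (φ^[N] γ) = β := by
          rintro ⟨a2, ha2⟩
          have hper : φ^[a2 * N + (b + 1) * N] β = β := by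
            rw [Function.iterate_add_apply, hδf, ha2]
          have hge : N ≤ (b + 1) * N := Nat.le_mul_of_pos_left N (by omega)
          exact hnp _ (by omega) hper
        rw [xfwd (φ^[N] γ) (b + 1) hδnb hδf]
        have hu : IsUnit (Wprod φ w (b * N) β) := IsUnit.of_mul_eq_one _ (hWV (b * N))
        refine hu.mul_left_cancel ?_
        have hγ : Wprod φ w (b * N) β * Wprod φ w N γ = Wprod φ w ((b + 1) * N) β := by
          rw [show (b + 1) * N = b * N + N by ring, Wprod_add, hb]
        calc Wprod φ w (b * N) β * (Wprod φ w N γ * (V ((b + 1) * N) * c))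
            = (Wprod φ w (b * N) β * Wprod φ w N γ) * V ((b + 1) * N) * c := by ring
          _ = (Wprod φ w ((b + 1) * N) β * V ((b + 1) * N)) * c := by rw [hγ]
          _ = c := by rw [hWV, one_mul]
          _ = (Wprod φ w (b * N) β * V (b * N)) * c := by rw [hWV, one_mul]
          _ = Wprod φ w (b * N) β * (V (b * N) * c) := by ring
      · rw [xnone γ h1 h2]
        have hd1 : ¬ ∃ a : ℕ, φ^[a * N] (φ^[N] γ) = β := by
          rintro ⟨a2, ha2⟩
          refine h1 ⟨a2 + 1, ?_⟩
          rw [show (a2 + 1) * N = a2 * N + N by ring, Function.iterate_add_apply]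
          exact ha2
        have hd2 : ¬ ∃ b : ℕ, φ^[b * N] β = φ^[N] γ := by
          rintro ⟨b2, hb2⟩
          cases b2 with
          | zero =>
            refine h1 ⟨1, ?_⟩
            rw [one_mul]
            exact (by simpa using hb2 : β = φ^[N] γ).symm
          | succ b' =>
            have hcomm : φ^[N] (φ^[b' * N] β) = φ^[N] γ := by
              rw [← Function.iterate_add_apply, show N + b' * N = (b' + 1) * N by ring]
              exact hb2
            exact h2 ⟨b', hφ.iterate N hcomm⟩
        rw [xnone (φ^[N] γ) hd1 hd2, mul_zero]
  · -- vanishing on I \ {β}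
    intro i hi hne
    apply xnone
    · rintro ⟨a, ha⟩
      cases a with
      | zero => exact hne (by simpa using ha)
      | succ a' =>
        have hbad : (a' + 1) * N ∈ Bad := ⟨i, hi, Or.inr ha⟩
        have hge : N ≤ (a' + 1) * N := Nat.le_mul_of_pos_left N (by omega)
        exact hNotBad _ hge hbad
    · rintro ⟨b, hb⟩
      cases b with
      | zero => exact hne ((by simpa using hb : β = i).symm)
      | succ b' =>
        have hbad : (b' + 1) * N ∈ Bad := ⟨i, hi, Or.inl hb⟩
        have hge : N ≤ (b' + 1) * N := Nat.le_mul_of_pos_left N (by omega)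
        exact hNotBad _ hge hbad


lemma exists_per_matching [Fintype R] (hφ : Function.Injective φ) (hw : ∀ α, IsUnit (w α))
    (z : Γ → R) (I : Finset Γ) :
    ∃ x ∈ perPoints (wshift φ w), ∀ i ∈ I, x i = z i := by
  classical
  have hsingle : ∀ β : Γ, ∃ x ∈ perPoints (wshift φ w),
      x β = z β ∧ ∀ i ∈ I, i ≠ β → x i = 0 := by
    intro β
    by_cases hper : ∃ p : ℕ, 1 ≤ p ∧ φ^[p] β = β
    · obtain ⟨p, hp, hfix⟩ := hper
      obtain ⟨x, h1, h2, h3⟩ := single_periodic hφ hw hp hfix (z β)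
      exact ⟨x, h1, h2, fun i _ hne => h3 i hne⟩
    · push_neg at hper
      exact single_nonper hφ hw (fun n hn => hper n hn) (z β) I
  choose f hf1 hf2 hf3 using hsingle
  refine ⟨∑ β ∈ I, f β, ?_, ?_⟩
  · exact Finset.sum_induction f (· ∈ perPoints (wshift φ w))
      (fun a b ha hb => perPoints_add φ w ha hb) (perPoints_zero φ w) (fun β _ => hf1 β)
  · intro i hi
    rw [Finset.sum_apply]
    rw [Finset.sum_eq_single i (fun b hb hbne => hf3 b i hi (Ne.symm hbne))
      (fun h => absurd hi h)]
    exact hf2 i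

lemma dense_of_matching [TopologicalSpace R] {S : Set (Γ → R)}
    (h : ∀ (z : Γ → R) (I : Finset Γ), ∃ x ∈ S, ∀ i ∈ I, x i = z i) : Dense S := by
  rw [dense_iff_inter_open]
  rintro U hU ⟨z, hz⟩
  obtain ⟨I, u, hu, hsub⟩ := (isOpen_pi_iff.1 hU) z hz
  obtain ⟨x, hxS, hx⟩ := h z I
  refine ⟨x, hsub fun i hi => ?_, hxS⟩
  rw [hx i hi]
  exact (hu i hi).2

end Helpers

theorem stmt15 {R Γ : Type*} [CommRing R] [Fintype R]
    [TopologicalSpace R] [DiscreteTopology R] [Nontrivial Γ]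
    (φ : Γ → Γ) (w : Γ → R) :
    Function.Surjective (wshift φ w) ↔ Dense (perPoints (wshift φ w)) := by
  constructor
  · intro hsurj
    have hw : ∀ α, IsUnit (w α) := by
      intro α
      obtain ⟨x, hx⟩ := hsurj (fun _ => 1)
      exact IsUnit.of_mul_eq_one _ (congrFun hx α)
    rcases subsingleton_or_nontrivial R with hR | hR
    · have hall : perPoints (wshift φ w) = Set.univ :=
        Set.eq_univ_of_forall fun y => by
          have hy : y = 0 := Subsingleton.elim y 0
          rw [hy]; exact perPoints_zero φ w
      rw [hall]; exact dense_univ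
    · have hφ : Function.Injective φ := by
        intro α β hab
        by_contra hne
        classical
        obtain ⟨x, hx⟩ := hsurj (fun γ => if γ = α then 1 else 0)
        have h1 : w α * x (φ α) = 1 := by
          have := congrFun hx α; simpa [wshift] using this
        have h2 : w β * x (φ β) = 0 := by
          have := congrFun hx β; simpa [wshift, Ne.symm hne] using this
        rw [← hab] at h2
        have h3 : x (φ α) = 0 := by
          obtain ⟨v, hv⟩ := (hw β).exists_right_inv
          calc x (φ α) = (v * w β) * x (φ α) := by rw [mul_comm v, hv, one_mul]
            _ = v * (w β * x (φ α)) := by ring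
            _ = 0 := by rw [h2, mul_zero]
        rw [h3, mul_zero] at h1
        exact zero_ne_one h1
      exact dense_of_matching fun z I => exists_per_matching hφ hw z I
  · intro hdense
    have hcont : Continuous (wshift φ w) :=
      continuous_pi fun α =>
        (continuous_of_discreteTopology (f := fun r : R => w α * r)).comp
          (continuous_apply (φ α))
    have hclosed : IsClosed (Set.range (wshift φ w)) := (isCompact_range hcont).isClosed
    have hsubset : perPoints (wshift φ w) ⊆ Set.range (wshift φ w) := by
      rintro x ⟨n, hn, hx⟩
      obtain ⟨m, rfl⟩ : ∃ m, n = m + 1 := ⟨n - 1, by omega⟩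
      exact ⟨(wshift φ w)^[m] x, by rw [← Function.iterate_succ_apply' (wshift φ w) m x]; exact hx⟩
    have hdr : Dense (Set.range (wshift φ w)) := hdense.mono hsubset
    have huniv : Set.range (wshift φ w) = Set.univ := by
      rw [← hclosed.closure_eq]; exact hdr.closure_eq
    exact Set.range_eq_univ.mp huniv
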